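/- Let T = S(n_1, ..., n_ℓ) be an all-even subdivided star with ℓ ≥ 3 branches and n_1 ≥ n_2 ≥ ... ≥ n_ℓ all positive even integers. Then γ'_SMB(T) ≤ max({i + ⌈log_2 n_i⌉ : 1 ≤ i ≤ ℓ−2} ∪ {ℓ−2 + ⌈log_2(n_{ℓ−1} + n_ℓ + 1)⌉}). -/

import Mathlib

open scoped Classical

open scoped Classical

noncomputable section

/-- Minimax value of the Maker–Breaker game on hypergraph with edge set `E`:
`mbVal E t M B` is the minimum number of further moves Maker needs to claim all
vertices of some hyperedge (Maker has claimed `M`, Breaker has claimed `B`,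
`t = true` iff Maker moves next), under optimal play; `⊤` if Maker cannot win. -/
def mbVal {V : Type} [Fintype V] (E : Set (Finset V)) :
    Bool → Finset V → Finset V → ℕ∞
  | true, M, B =>
      if ∃ e ∈ E, e ⊆ M then 0
      else ⨅ v ∈ Finset.univ \ (M ∪ B), (1 + mbVal E false (insert v M) B)
  | false, M, B =>
      if ∃ e ∈ E, e ⊆ M then 0
      else if Finset.univ \ (M ∪ B) = ∅ then ⊤
      else ⨆ v ∈ Finset.univ \ (M ∪ B), mbVal E true M (insert v B)
termination_by _t M B => (Finset.univ \ (M ∪ B)).card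
decreasing_by
  all_goals
    apply Finset.card_lt_card
    rw [Finset.ssubset_iff_of_subset]
    · refine ⟨v, ‹_›, by simp⟩
    · intro x hx
      simp only [Finset.mem_sdiff, Finset.mem_univ, true_and, Finset.mem_union,
        Finset.mem_insert] at hx ⊢
      tauto

/-- The closed neighborhood of `v` as a finset. -/
def closedNbhdFinset {V : Type} [Fintype V] (G : SimpleGraph V) (v : V) : Finset V :=
  Finset.univ.filter (fun w => w = v ∨ G.Adj v w)

/-- The closed neighborhood hypergraph of a graph. -/
def nbhdHyp {V : Type} [Fintype V] (G : SimpleGraph V) : Set (Finset V) :=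
  Set.range (closedNbhdFinset G)

/-- `γ'_SMB(G)`: the number of moves Staller (= Maker on the closed neighborhood
hypergraph, moving first) needs to win the Maker–Breaker domination game on `G`. -/
def gammaSMB' {V : Type} [Fintype V] (G : SimpleGraph V) : ℕ∞ :=
  mbVal (nbhdHyp G) true ∅ ∅

end


/-- The subdivided star `S(n 0, …, n (ℓ-1))`: `ℓ` vertex-disjoint paths
(branches) of orders `n 0, …, n (ℓ-1)` together with a central vertex (`none`)
adjacent to one endpoint of each branch. -/
def subdividedStar (ℓ : ℕ) (n : ℕ → ℕ) :
    SimpleGraph (Option (Σ i : Fin ℓ, Fin (n i))) :=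
  SimpleGraph.fromRel (fun a b =>
    (∃ (i : Fin ℓ) (h : 0 < n i), a = none ∧ b = some ⟨i, ⟨0, h⟩⟩) ∨
    (∃ (i : Fin ℓ) (j : Fin (n i)) (hj : (j : ℕ) + 1 < n i),
      a = some ⟨i, j⟩ ∧ b = some ⟨i, ⟨(j : ℕ) + 1, hj⟩⟩))



/-! ### Auxiliary machinery for the proof -/

section WinSec
variable {V : Type} [Fintype V]

/-- Maker (moving first) can win within `k` moves. -/
inductive MBWin (E : Set (Finset V)) : ℕ → Finset V → Finset V → Prop
  | done (k : ℕ) (M B : Finset V) : (∃ e ∈ E, e ⊆ M) → MBWin E k M B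
  | stepWin (k : ℕ) (M B : Finset V) (v : V) (hv : v ∈ Finset.univ \ (M ∪ B))
      (h : ∃ e ∈ E, e ⊆ insert v M) : MBWin E (k+1) M B
  | step (k : ℕ) (M B : Finset V) (v : V) (hv : v ∈ Finset.univ \ (M ∪ B))
      (hne : (Finset.univ \ (insert v M ∪ B)).Nonempty)
      (h : ∀ u, u ∈ Finset.univ \ (insert v M ∪ B) → MBWin E k (insert v M) (insert u B)) :
      MBWin E (k+1) M B

lemma MBWin.mbVal_le {E : Set (Finset V)} {k : ℕ} {M B : Finset V}
    (h : MBWin E k M B) : mbVal E true M B ≤ (k : ℕ∞) := by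
  induction h with
  | done k M B he =>
      rw [mbVal, if_pos he]; exact zero_le
  | stepWin k M B v hv h =>
      rw [mbVal]
      split
      · exact zero_le
      have h2 : mbVal E false (insert v M) B = 0 := by rw [mbVal, if_pos h]
      calc ⨅ w ∈ Finset.univ \ (M ∪ B), (1 + mbVal E false (insert w M) B)
          ≤ 1 + mbVal E false (insert v M) B := biInf_le _ hv
        _ ≤ ((k+1 : ℕ) : ℕ∞) := by rw [h2]; push_cast; simp
  | step k M B v hv hne h ih =>
      rw [mbVal]
      split
      · exact zero_le
      have h2 : mbVal E false (insert v M) B ≤ (k : ℕ∞) := by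
        rw [mbVal]
        split
        · exact zero_le
        · rw [if_neg (Finset.nonempty_iff_ne_empty.mp hne)]
          exact iSup₂_le fun u hu => ih u hu
      calc ⨅ w ∈ Finset.univ \ (M ∪ B), (1 + mbVal E false (insert w M) B)
          ≤ 1 + mbVal E false (insert v M) B := biInf_le _ hv
        _ ≤ 1 + (k : ℕ∞) := by gcongr
        _ = ((k+1 : ℕ) : ℕ∞) := by push_cast; ring

/-- A "good segment": a run of unclaimed vertices, each of whose closed
neighborhoods is contained in Maker's set together with its segment neighbors. -/
structure MBGoodSeg (G : SimpleGraph V) (seg : ℕ → V) (k : ℕ) (M B : Finset V) : Prop where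
  inj : ∀ i < k, ∀ j < k, seg i = seg j → i = j
  notM : ∀ i < k, seg i ∉ M
  notB : ∀ i < k, seg i ∉ B
  nbhd : ∀ i < k, ∀ w ∈ closedNbhdFinset G (seg i),
      w ∈ M ∨ w = seg i ∨ (0 < i ∧ w = seg (i-1)) ∨ (i+1 < k ∧ w = seg (i+1))

lemma mbwin_of_goodSeg (G : SimpleGraph V) : ∀ (t k : ℕ) (seg : ℕ → V) (M B : Finset V),
    k % 2 = 1 → k ≤ 2^t - 1 → MBGoodSeg G seg k M B → MBWin (nbhdHyp G) t M B := by
  intro t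
  induction t with
  | zero => intro k seg M B hodd hk; omega
  | succ t ih =>
    intro k seg M B hodd hk hg
    have hv0 : ∀ i < k, seg i ∈ Finset.univ \ (M ∪ B) := fun i hi => by
      simp only [Finset.mem_sdiff, Finset.mem_univ, true_and, Finset.mem_union, not_or]
      exact ⟨hg.notM i hi, hg.notB i hi⟩
    by_cases hk1 : k = 1
    · subst hk1
      refine MBWin.stepWin _ _ _ (seg 0) (hv0 0 one_pos)
        ⟨closedNbhdFinset G (seg 0), ⟨seg 0, rfl⟩, ?_⟩
      intro w hw
      rcases hg.nbhd 0 one_pos w hw with h | h | h | h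
      · exact Finset.mem_insert_of_mem h
      · simp [h]
      · omega
      · omega
    have hk3 : 3 ≤ k := by omega
    have ht1 : 1 ≤ t := by
      by_contra h
      interval_cases t
      omega
    have h2t2 : 2 ^ (t + 1) = 2 ^ t + 2 ^ t := by ring
    have h2te : 2 ^ t % 2 = 0 := by
      have : 2 ^ t = 2 * 2 ^ (t - 1) := by
        rw [← pow_succ']
        congr 1
        omega
      omega
    set a := k / 2 with ha
    have hak : k = 2 * a + 1 := by omega
    obtain ⟨j, hjodd, hjpos, hjk, hjle, hrodd, hrle⟩ :
        ∃ j, j % 2 = 1 ∧ 0 < j ∧ j < k ∧ j ≤ 2 ^ t - 1 ∧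
          (k - j - 1) % 2 = 1 ∧ k - j - 1 ≤ 2 ^ t - 1 := by
      by_cases hpar : a % 2 = 1
      · exact ⟨a, by omega, by omega, by omega, by omega, by omega, by omega⟩
      · exact ⟨a - 1, by omega, by omega, by omega, by omega, by omega, by omega⟩
    refine MBWin.step _ _ _ (seg j) (hv0 j hjk) ⟨seg 0, ?_⟩ ?_
    · simp only [Finset.mem_sdiff, Finset.mem_univ, true_and, Finset.mem_union, not_or,
        Finset.mem_insert]
      refine ⟨⟨fun h => ?_, hg.notM 0 (by omega)⟩, hg.notB 0 (by omega)⟩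
      exact absurd (hg.inj 0 (by omega) j hjk h) (by omega)
    intro u hu
    simp only [Finset.mem_sdiff, Finset.mem_univ, true_and, Finset.mem_union, not_or,
      Finset.mem_insert] at hu
    obtain ⟨⟨huj, huM⟩, huB⟩ := hu
    by_cases hcase : ∃ i, j < i ∧ i < k ∧ u = seg i
    · refine ih j seg (insert (seg j) M) (insert u B) hjodd hjle ?_
      obtain ⟨i₀, hi₀j, hi₀k, hu⟩ := hcase
      refine ⟨fun i hi i' hi' h => hg.inj i (by omega) i' (by omega) h, ?_, ?_, ?_⟩
      · intro i hi
        simp only [Finset.mem_insert, not_or]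
        exact ⟨fun h => absurd (hg.inj i (by omega) j hjk h) (by omega),
          hg.notM i (by omega)⟩
      · intro i hi
        simp only [Finset.mem_insert, not_or]
        refine ⟨fun h => ?_, hg.notB i (by omega)⟩
        rw [hu] at h
        exact absurd (hg.inj i (by omega) i₀ hi₀k h) (by omega)
      · intro i hi w hw
        rcases hg.nbhd i (by omega) w hw with h | h | h | h
        · exact Or.inl (Finset.mem_insert_of_mem h)
        · exact Or.inr (Or.inl h)
        · exact Or.inr (Or.inr (Or.inl h))
        · rcases Nat.lt_or_ge (i+1) j with h' | h'
          · exact Or.inr (Or.inr (Or.inr ⟨h', h.2⟩))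
          · have hij : i + 1 = j := by omega
            refine Or.inl ?_
            rw [h.2, hij]
            exact Finset.mem_insert_self _ _
    · push_neg at hcase
      refine ih (k - j - 1) (fun i => seg (j+1+i)) (insert (seg j) M) (insert u B)
        hrodd hrle ?_
      refine ⟨?_, ?_, ?_, ?_⟩
      · intro i hi i' hi' h
        have := hg.inj (j+1+i) (by omega) (j+1+i') (by omega) h
        omega
      · intro i hi
        simp only [Finset.mem_insert, not_or]
        exact ⟨fun h => absurd (hg.inj (j+1+i) (by omega) j hjk h) (by omega),
          hg.notM _ (by omega)⟩
      · intro i hi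
        simp only [Finset.mem_insert, not_or]
        refine ⟨fun h => hcase (j+1+i) (by omega) (by omega) h.symm, hg.notB _ (by omega)⟩
      · intro i hi w hw
        rcases hg.nbhd (j+1+i) (by omega) w hw with h | h | h | h
        · exact Or.inl (Finset.mem_insert_of_mem h)
        · exact Or.inr (Or.inl h)
        · rcases Nat.eq_zero_or_pos i with rfl | hipos
          · refine Or.inl ?_
            have h0 : j + 1 + 0 - 1 = j := by omega
            rw [h.2, h0]
            exact Finset.mem_insert_self _ _
          · exact Or.inr (Or.inr (Or.inl ⟨hipos, h.2.trans (congrArg seg (by omega))⟩))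
        · exact Or.inr (Or.inr (Or.inr ⟨by omega, h.2.trans (congrArg seg (by omega))⟩))

end WinSec

section StarAux
variable {ℓ : ℕ} {n : ℕ → ℕ}

lemma star_some_eq_iff {i i' : Fin ℓ} {j : Fin (n ↑i)} {j' : Fin (n ↑i')} :
    (some ⟨i, j⟩ : Option (Σ i : Fin ℓ, Fin (n ↑i))) = some ⟨i', j'⟩ ↔
      i = i' ∧ (j : ℕ) = (j' : ℕ) := by
  constructor
  · intro h
    injection h with h
    obtain ⟨h1, h2⟩ := Sigma.mk.inj_iff.1 h
    subst h1
    exact ⟨rfl, congrArg Fin.val (eq_of_heq h2)⟩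
  · rintro ⟨rfl, h2⟩
    rw [Fin.ext h2]

lemma star_mk_eq_iff {i i' : Fin ℓ} {a b : ℕ} {ha : a < n ↑i} {hb : b < n ↑i'} :
    (some ⟨i, ⟨a, ha⟩⟩ : Option (Σ i : Fin ℓ, Fin (n ↑i))) = some ⟨i', ⟨b, hb⟩⟩ ↔
      i = i' ∧ a = b :=
  star_some_eq_iff

lemma mem_cn_iff {V : Type} [Fintype V] (G : SimpleGraph V) (v w : V) :
    w ∈ closedNbhdFinset G v ↔ w = v ∨ G.Adj v w := by
  simp [closedNbhdFinset]

lemma star_nbhd_some_cases (i : Fin ℓ) (q : ℕ) (hq : q < n ↑i)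
    (w : Option (Σ i : Fin ℓ, Fin (n ↑i)))
    (hw : w ∈ closedNbhdFinset (subdividedStar ℓ n) (some ⟨i, ⟨q, hq⟩⟩)) :
    w = some ⟨i, ⟨q, hq⟩⟩ ∨
    (q = 0 ∧ w = none) ∨
    (∃ h : q + 1 < n ↑i, w = some ⟨i, ⟨q + 1, h⟩⟩) ∨
    (0 < q ∧ ∃ h : q - 1 < n ↑i, w = some ⟨i, ⟨q - 1, h⟩⟩) := by
  set j : Fin (n ↑i) := ⟨q, hq⟩ with hj
  rw [mem_cn_iff] at hw
  rcases hw with h | h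
  · exact Or.inl h
  · rw [subdividedStar, SimpleGraph.fromRel_adj] at h
    obtain ⟨-, h | h⟩ := h
    · rcases h with ⟨i', h', h1, h2⟩ | ⟨i', j', hj', h1, h2⟩
      · exact absurd h1 (by simp)
      · obtain ⟨rfl, hjj⟩ := star_some_eq_iff.1 h1
        have hjq : (j' : ℕ) = q := hjj.symm
        refine Or.inr (Or.inr (Or.inl ⟨by omega, ?_⟩))
        rw [h2, star_some_eq_iff]
        exact ⟨rfl, show (j' : ℕ) + 1 = q + 1 by omega⟩
    · rcases h with ⟨i', h', h1, h2⟩ | ⟨i', j', hj', h1, h2⟩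
      · obtain ⟨rfl, hjj⟩ := star_some_eq_iff.1 h2
        exact Or.inr (Or.inl ⟨hjj, h1⟩)
      · obtain ⟨rfl, hjj⟩ := star_some_eq_iff.1 h2
        have hjj' : q = (j' : ℕ) + 1 := hjj
        refine Or.inr (Or.inr (Or.inr ⟨by omega, ⟨by omega, ?_⟩⟩))
        rw [h1, star_some_eq_iff]
        exact ⟨rfl, show (j' : ℕ) = q - 1 by omega⟩

lemma star_nbhd_none_cases (w : Option (Σ i : Fin ℓ, Fin (n ↑i)))
    (hw : w ∈ closedNbhdFinset (subdividedStar ℓ n) none) :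
    w = none ∨ ∃ (i : Fin ℓ) (h : 0 < n ↑i), w = some ⟨i, ⟨0, h⟩⟩ := by
  rw [mem_cn_iff] at hw
  rcases hw with h | h
  · exact Or.inl h
  · rw [subdividedStar, SimpleGraph.fromRel_adj] at h
    obtain ⟨-, h | h⟩ := h
    · rcases h with ⟨i', h', h1, h2⟩ | ⟨i', j', hj', h1, h2⟩
      · exact Or.inr ⟨i', h', h2⟩
      · exact absurd h1 (by simp)
    · rcases h with ⟨i', h', h1, h2⟩ | ⟨i', j', hj', h1, h2⟩
      · exact absurd h2 (by simp)
      · exact absurd h2 (by simp)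

/-- Staller's claimed set after `r` opening moves: the first vertices of branches `0,…,r-1`. -/
def Mset (ℓ : ℕ) (n : ℕ → ℕ) (r : ℕ) : Finset (Option (Σ i : Fin ℓ, Fin (n ↑i))) :=
  Finset.univ.filter
    (fun v => ∃ (i : Fin ℓ) (h : 0 < n ↑i), (i : ℕ) < r ∧ v = some ⟨i, ⟨0, h⟩⟩)

lemma mem_Mset {r : ℕ} {v : Option (Σ i : Fin ℓ, Fin (n ↑i))} :
    v ∈ Mset ℓ n r ↔ ∃ (i : Fin ℓ) (h : 0 < n ↑i), (i : ℕ) < r ∧ v = some ⟨i, ⟨0, h⟩⟩ := by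
  simp [Mset]

lemma none_not_mem_Mset {r : ℕ} : (none : Option (Σ i : Fin ℓ, Fin (n ↑i))) ∉ Mset ℓ n r := by
  rw [mem_Mset]
  rintro ⟨i, h, hi, hv⟩
  exact absurd hv (by simp)

lemma some_mem_Mset {r : ℕ} {i : Fin ℓ} {q : ℕ} {hq : q < n ↑i} :
    (some ⟨i, ⟨q, hq⟩⟩ : Option (Σ i : Fin ℓ, Fin (n ↑i))) ∈ Mset ℓ n r ↔
      (i : ℕ) < r ∧ q = 0 := by
  rw [mem_Mset]
  constructor
  · rintro ⟨i', h', hi', hv⟩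
    obtain ⟨rfl, hj⟩ := star_some_eq_iff.1 hv
    exact ⟨hi', hj⟩
  · rintro ⟨hi, rfl⟩
    exact ⟨i, by omega, hi, rfl⟩

lemma Mset_succ {r : ℕ} (hr : r < ℓ) (h0 : 0 < n r)
    {inst : DecidableEq (Option (Σ i : Fin ℓ, Fin (n ↑i)))} :
    @insert _ _ (@Finset.instInsert _ inst) (some ⟨⟨r, hr⟩, ⟨0, h0⟩⟩) (Mset ℓ n r)
      = Mset ℓ n (r + 1) := by
  ext v
  simp only [Finset.mem_insert, mem_Mset]
  constructor
  · rintro (rfl | ⟨i, h, hi, rfl⟩)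
    · exact ⟨⟨r, hr⟩, h0, by simp, rfl⟩
    · exact ⟨i, h, by omega, rfl⟩
  · rintro ⟨i, h, hi, rfl⟩
    rcases Nat.lt_or_ge (i : ℕ) r with h' | h'
    · exact Or.inr ⟨i, h, h', rfl⟩
    · have hir : (i : ℕ) = r := by omega
      exact Or.inl (star_some_eq_iff.2 ⟨Fin.ext (by simp [hir]), rfl⟩)

end StarAux

section MainAux
variable {ℓ : ℕ} {n : ℕ → ℕ}

lemma clog_le_pow {m t : ℕ} (h : Nat.clog 2 m ≤ t) : m ≤ 2 ^ t :=
  le_trans (Nat.le_pow_clog one_lt_two m) (Nat.pow_le_pow_right (by norm_num) h)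

lemma odd_succ_le_pow {k t : ℕ} (hk : k % 2 = 1) (h3 : 3 ≤ k) (h : k ≤ 2 ^ t) :
    k + 1 ≤ 2 ^ t := by
  rcases Nat.eq_zero_or_pos t with rfl | ht
  · simp at h; omega
  have h2 : 2 ^ t % 2 = 0 := by
    have he : 2 ^ t = 2 * 2 ^ (t - 1) := by
      rw [← pow_succ']
      congr 1
      omega
    omega
  omega

/-- The untouched tail of branch `r` after Staller claims its first vertex. -/
def tailSeg (ℓ : ℕ) (n : ℕ → ℕ) (r : ℕ) (hr : r < ℓ) (p : ℕ) :
    Option (Σ i : Fin ℓ, Fin (n ↑i)) :=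
  if hp : p + 1 < n r then some ⟨⟨r, hr⟩, ⟨p + 1, hp⟩⟩ else none

lemma tailSeg_eval {r : ℕ} (hr : r < ℓ) {p : ℕ} (hp : p + 1 < n r) :
    tailSeg ℓ n r hr p = some ⟨⟨r, hr⟩, ⟨p + 1, hp⟩⟩ :=
  dif_pos hp

/-- The final path: branch `ℓ-2` (reversed), the center, then branch `ℓ-1`. -/
def finalSeg (ℓ : ℕ) (n : ℕ → ℕ) (h2 : ℓ - 2 < ℓ) (h1 : ℓ - 1 < ℓ) (p : ℕ) :
    Option (Σ i : Fin ℓ, Fin (n ↑i)) :=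
  if hp : p < n (ℓ - 2) then
    some ⟨⟨ℓ - 2, h2⟩, ⟨n (ℓ - 2) - 1 - p, show n (ℓ - 2) - 1 - p < n (ℓ - 2) by omega⟩⟩
  else if hp2 : p ≠ n (ℓ - 2) ∧ p - n (ℓ - 2) - 1 < n (ℓ - 1) then
    some ⟨⟨ℓ - 1, h1⟩, ⟨p - n (ℓ - 2) - 1, hp2.2⟩⟩
  else none

lemma finalSeg_eval1 (h2 : ℓ - 2 < ℓ) (h1 : ℓ - 1 < ℓ) {p : ℕ} (hp : p < n (ℓ - 2)) :
    finalSeg ℓ n h2 h1 p =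
      some ⟨⟨ℓ - 2, h2⟩, ⟨n (ℓ - 2) - 1 - p, show n (ℓ - 2) - 1 - p < n (ℓ - 2) by omega⟩⟩ :=
  dif_pos hp

lemma finalSeg_eval2 (h2 : ℓ - 2 < ℓ) (h1 : ℓ - 1 < ℓ) :
    finalSeg ℓ n h2 h1 (n (ℓ - 2)) = none := by
  simp only [finalSeg]
  rw [dif_neg (lt_irrefl _), dif_neg (by simp)]

lemma finalSeg_eval3 (h2 : ℓ - 2 < ℓ) (h1 : ℓ - 1 < ℓ) {p : ℕ}
    (hgt : n (ℓ - 2) < p) (hq : p - n (ℓ - 2) - 1 < n (ℓ - 1)) :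
    finalSeg ℓ n h2 h1 p = some ⟨⟨ℓ - 1, h1⟩, ⟨p - n (ℓ - 2) - 1, hq⟩⟩ := by
  simp only [finalSeg]
  rw [dif_neg (by omega), dif_pos ⟨by omega, hq⟩]

lemma star_main (ℓ : ℕ) (n : ℕ → ℕ) (hℓ : 3 ≤ ℓ) (hpos : ∀ i < ℓ, 0 < n i)
    (heven : ∀ i < ℓ, Even (n i)) (bound : ℕ)
    (hb1 : ∀ i < ℓ - 2, i + 1 + Nat.clog 2 (n i) ≤ bound)
    (hb2 : ℓ - 2 + Nat.clog 2 (n (ℓ - 2) + n (ℓ - 1) + 1) ≤ bound) :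
    ∀ (d r : ℕ), r + d = ℓ - 2 →
      ∀ B : Finset (Option (Σ i : Fin ℓ, Fin (n ↑i))), none ∉ B →
      (∀ (i : Fin ℓ) (j : Fin (n ↑i)), r ≤ (i : ℕ) → some ⟨i, j⟩ ∉ B) →
      MBWin (nbhdHyp (subdividedStar ℓ n)) (bound - r) (Mset ℓ n r) B := by
  have h2ℓ : ℓ - 2 < ℓ := by omega
  have h1ℓ : ℓ - 1 < ℓ := by omega
  obtain ⟨x1, hx1⟩ := heven (ℓ - 2) (by omega)
  obtain ⟨x2, hx2⟩ := heven (ℓ - 1) (by omega)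
  have hp1 := hpos (ℓ - 2) (by omega)
  have hp2 := hpos (ℓ - 1) (by omega)
  have hKodd : (n (ℓ - 2) + n (ℓ - 1) + 1) % 2 = 1 := by omega
  have hclog3 : 3 ≤ Nat.clog 2 (n (ℓ - 2) + n (ℓ - 1) + 1) := by
    by_contra hcon
    have h4 : n (ℓ - 2) + n (ℓ - 1) + 1 ≤ 2 ^ 2 := clog_le_pow (by omega)
    norm_num at h4
    omega
  intro d
  induction d with
  | zero =>
    intro r hr B hB0 hBs
    obtain rfl : r = ℓ - 2 := by omega
    have ht : Nat.clog 2 (n (ℓ - 2) + n (ℓ - 1) + 1) ≤ bound - (ℓ - 2) := by omega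
    have hKle : n (ℓ - 2) + n (ℓ - 1) + 1 ≤ 2 ^ (bound - (ℓ - 2)) := clog_le_pow ht
    have hKle' : n (ℓ - 2) + n (ℓ - 1) + 1 ≤ 2 ^ (bound - (ℓ - 2)) - 1 := by
      have := odd_succ_le_pow hKodd (by omega) hKle
      omega
    refine mbwin_of_goodSeg _ _ (n (ℓ - 2) + n (ℓ - 1) + 1) (finalSeg ℓ n h2ℓ h1ℓ) _ _
      hKodd hKle' ⟨?_, ?_, ?_, ?_⟩
    · -- injectivity
      intro p hp p' hp' heq
      rcases Nat.lt_trichotomy p (n (ℓ - 2)) with hA | hA | hA <;>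
        rcases Nat.lt_trichotomy p' (n (ℓ - 2)) with hA' | hA' | hA'
      · rw [finalSeg_eval1 h2ℓ h1ℓ hA, finalSeg_eval1 h2ℓ h1ℓ hA'] at heq
        obtain ⟨-, hv⟩ := star_mk_eq_iff.1 heq
        omega
      · rw [finalSeg_eval1 h2ℓ h1ℓ hA, hA', finalSeg_eval2] at heq
        exact absurd heq (by simp)
      · rw [finalSeg_eval1 h2ℓ h1ℓ hA, finalSeg_eval3 h2ℓ h1ℓ hA' (by omega)] at heq
        obtain ⟨hi, -⟩ := star_mk_eq_iff.1 heq
        have h12 : ℓ - 2 = ℓ - 1 := congrArg Fin.val hi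
        omega
      · rw [hA, finalSeg_eval2, finalSeg_eval1 h2ℓ h1ℓ hA'] at heq
        exact absurd heq (by simp)
      · omega
      · rw [hA, finalSeg_eval2, finalSeg_eval3 h2ℓ h1ℓ hA' (by omega)] at heq
        exact absurd heq (by simp)
      · rw [finalSeg_eval3 h2ℓ h1ℓ hA (by omega), finalSeg_eval1 h2ℓ h1ℓ hA'] at heq
        obtain ⟨hi, -⟩ := star_mk_eq_iff.1 heq
        have h12 : ℓ - 1 = ℓ - 2 := congrArg Fin.val hi
        omega
      · rw [finalSeg_eval3 h2ℓ h1ℓ hA (by omega), hA', finalSeg_eval2] at heq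
        exact absurd heq (by simp)
      · rw [finalSeg_eval3 h2ℓ h1ℓ hA (by omega), finalSeg_eval3 h2ℓ h1ℓ hA' (by omega)] at heq
        obtain ⟨-, hv⟩ := star_mk_eq_iff.1 heq
        omega
    · -- not in M
      intro p hp
      rcases Nat.lt_trichotomy p (n (ℓ - 2)) with hA | hA | hA
      · rw [finalSeg_eval1 h2ℓ h1ℓ hA, some_mem_Mset]
        rintro ⟨h, -⟩
        exact absurd (show ℓ - 2 < ℓ - 2 from h) (by omega)
      · rw [hA, finalSeg_eval2]
        exact none_not_mem_Mset
      · rw [finalSeg_eval3 h2ℓ h1ℓ hA (by omega), some_mem_Mset]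
        rintro ⟨h, -⟩
        exact absurd (show ℓ - 1 < ℓ - 2 from h) (by omega)
    · -- not in B
      intro p hp
      rcases Nat.lt_trichotomy p (n (ℓ - 2)) with hA | hA | hA
      · rw [finalSeg_eval1 h2ℓ h1ℓ hA]
        exact hBs _ _ (Nat.le_refl _)
      · rw [hA, finalSeg_eval2]
        exact hB0
      · rw [finalSeg_eval3 h2ℓ h1ℓ hA (by omega)]
        exact hBs _ _ (show ℓ - 2 ≤ ℓ - 1 by omega)
    · -- neighborhoods
      intro p hp w hw
      rcases Nat.lt_trichotomy p (n (ℓ - 2)) with hA | hA | hA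
      · rw [finalSeg_eval1 h2ℓ h1ℓ hA] at hw
        rcases star_nbhd_some_cases _ _ _ w hw with h | ⟨h0, hwn⟩ | ⟨hlt, hw'⟩ | ⟨hq0, hlt2, hw'⟩
        · exact Or.inr (Or.inl (h.trans (finalSeg_eval1 h2ℓ h1ℓ hA).symm))
        · refine Or.inr (Or.inr (Or.inr ⟨by omega, ?_⟩))
          rw [hwn, show p + 1 = n (ℓ - 2) by omega, finalSeg_eval2]
        · have hlt' : n (ℓ - 2) - 1 - p + 1 < n (ℓ - 2) := hlt
          refine Or.inr (Or.inr (Or.inl ⟨by omega, ?_⟩))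
          rw [hw', finalSeg_eval1 h2ℓ h1ℓ (show p - 1 < n (ℓ - 2) by omega)]
          exact star_mk_eq_iff.2 ⟨rfl, by omega⟩
        · refine Or.inr (Or.inr (Or.inr ⟨by omega, ?_⟩))
          rw [hw', finalSeg_eval1 h2ℓ h1ℓ (show p + 1 < n (ℓ - 2) by omega)]
          exact star_mk_eq_iff.2 ⟨rfl, by omega⟩
      · rw [hA, finalSeg_eval2] at hw
        rcases star_nbhd_none_cases w hw with hwn | ⟨i', h0', hw'⟩
        · exact Or.inr (Or.inl (by rw [hwn, hA, finalSeg_eval2]))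
        · have hi' : (i' : ℕ) < ℓ := i'.isLt
          rcases Nat.lt_trichotomy (i' : ℕ) (ℓ - 2) with hB | hB | hB
          · refine Or.inl ?_
            rw [hw', some_mem_Mset]
            exact ⟨hB, rfl⟩
          · refine Or.inr (Or.inr (Or.inl ⟨by omega, ?_⟩))
            rw [hw', finalSeg_eval1 h2ℓ h1ℓ (show p - 1 < n (ℓ - 2) by omega)]
            exact star_mk_eq_iff.2 ⟨Fin.ext (show (i' : ℕ) = ℓ - 2 from hB), by omega⟩
          · have hB' : (i' : ℕ) = ℓ - 1 := by omega
            refine Or.inr (Or.inr (Or.inr ⟨by omega, ?_⟩))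
            rw [hw', finalSeg_eval3 h2ℓ h1ℓ (by omega) (by omega)]
            exact star_mk_eq_iff.2 ⟨Fin.ext (show (i' : ℕ) = ℓ - 1 from hB'), by omega⟩
      · have hq : p - n (ℓ - 2) - 1 < n (ℓ - 1) := by omega
        rw [finalSeg_eval3 h2ℓ h1ℓ hA hq] at hw
        rcases star_nbhd_some_cases _ _ _ w hw with h | ⟨h0, hwn⟩ | ⟨hlt, hw'⟩ | ⟨hq0, hlt2, hw'⟩
        · exact Or.inr (Or.inl (h.trans (finalSeg_eval3 h2ℓ h1ℓ hA hq).symm))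
        · refine Or.inr (Or.inr (Or.inl ⟨by omega, ?_⟩))
          rw [hwn, show p - 1 = n (ℓ - 2) by omega, finalSeg_eval2]
        · have hlt' : p - n (ℓ - 2) - 1 + 1 < n (ℓ - 1) := hlt
          refine Or.inr (Or.inr (Or.inr ⟨by omega, ?_⟩))
          rw [hw', finalSeg_eval3 h2ℓ h1ℓ (by omega) (by omega)]
          exact star_mk_eq_iff.2 ⟨rfl, by omega⟩
        · refine Or.inr (Or.inr (Or.inl ⟨by omega, ?_⟩))
          rw [hw', finalSeg_eval3 h2ℓ h1ℓ (by omega) (by omega)]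
          exact star_mk_eq_iff.2 ⟨rfl, by omega⟩
  | succ d ih =>
    intro r hr B hB0 hBs
    have hrlt : r < ℓ - 2 := by omega
    have hrℓ : r < ℓ := by omega
    have hnr : 0 < n r := hpos r (by omega)
    obtain ⟨xr, hxr⟩ := heven r (by omega)
    have hbound : r + 1 < bound := by omega
    have hsub : bound - r = (bound - (r + 1)) + 1 := by omega
    rw [hsub]
    refine MBWin.step _ _ _ (some ⟨⟨r, hrℓ⟩, ⟨0, hnr⟩⟩) ?_ ?_ ?_
    · simp only [Finset.mem_sdiff, Finset.mem_univ, true_and, Finset.mem_union, not_or]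
      refine ⟨?_, hBs _ _ (Nat.le_refl _)⟩
      rw [some_mem_Mset]
      rintro ⟨h, -⟩
      exact absurd (show r < r from h) (by omega)
    · refine ⟨some ⟨⟨ℓ - 1, h1ℓ⟩, ⟨0, hp2⟩⟩, ?_⟩
      simp only [Finset.mem_sdiff, Finset.mem_univ, true_and, Finset.mem_union, not_or,
        Finset.mem_insert]
      refine ⟨⟨fun h => ?_, ?_⟩, hBs _ _ (show r ≤ ℓ - 1 by omega)⟩
      · obtain ⟨hi, -⟩ := star_mk_eq_iff.1 h
        have h12 : ℓ - 1 = r := congrArg Fin.val hi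
        omega
      · rw [some_mem_Mset]
        rintro ⟨h, -⟩
        exact absurd (show ℓ - 1 < r from h) (by omega)
    · intro u hu
      rw [Mset_succ hrℓ hnr]
      simp only [Finset.mem_sdiff, Finset.mem_univ, true_and, Finset.mem_union, not_or,
        Finset.mem_insert] at hu
      obtain ⟨⟨huv, huM⟩, huB⟩ := hu
      by_cases hcase : ∃ (q : ℕ) (hq : q < n r), 0 < q ∧ u = some ⟨⟨r, hrℓ⟩, ⟨q, hq⟩⟩
      · obtain ⟨q, hq, hqpos, rfl⟩ := hcase
        refine ih (r + 1) (by omega) _ ?_ ?_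
        · simp only [Finset.mem_insert, not_or]
          exact ⟨by simp, hB0⟩
        · intro i j hij
          simp only [Finset.mem_insert, not_or]
          refine ⟨fun h => ?_, hBs i j (by omega)⟩
          obtain ⟨hi, -⟩ := star_some_eq_iff.1 h
          have h12 : (i : ℕ) = r := congrArg Fin.val hi
          omega
      · push_neg at hcase
        refine mbwin_of_goodSeg _ _ (n r - 1) (tailSeg ℓ n r hrℓ) _ _ (by omega) ?_
          ⟨?_, ?_, ?_, ?_⟩
        · have hc : Nat.clog 2 (n r) ≤ bound - (r + 1) := by
            have := hb1 r hrlt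
            omega
          have := clog_le_pow hc
          omega
        · intro p hp p' hp' heq
          rw [tailSeg_eval hrℓ (by omega), tailSeg_eval hrℓ (by omega)] at heq
          obtain ⟨-, hv⟩ := star_mk_eq_iff.1 heq
          omega
        · intro p hp
          rw [tailSeg_eval hrℓ (by omega), some_mem_Mset]
          rintro ⟨-, h⟩
          omega
        · intro p hp
          rw [tailSeg_eval hrℓ (by omega)]
          simp only [Finset.mem_insert, not_or]
          exact ⟨fun h => hcase (p + 1) (by omega) (by omega) h.symm,
            hBs _ _ (Nat.le_refl _)⟩
        · intro p hp w hw
          rw [tailSeg_eval hrℓ (show p + 1 < n r by omega)] at hw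
          rcases star_nbhd_some_cases _ _ _ w hw with h | ⟨h0, hwn⟩ | ⟨hlt, hw'⟩ | ⟨hq0, hlt2, hw'⟩
          · exact Or.inr (Or.inl (h.trans (tailSeg_eval hrℓ (by omega)).symm))
          · exact absurd h0 (by omega)
          · have hlt' : p + 1 + 1 < n r := hlt
            refine Or.inr (Or.inr (Or.inr ⟨by omega, ?_⟩))
            rw [hw', tailSeg_eval hrℓ (show p + 1 + 1 < n r by omega)]
          · rcases Nat.eq_zero_or_pos p with rfl | hppos
            · refine Or.inl ?_
              rw [hw', some_mem_Mset]
              exact ⟨show r < r + 1 by omega, by omega⟩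
            · refine Or.inr (Or.inr (Or.inl ⟨hppos, ?_⟩))
              rw [hw', tailSeg_eval hrℓ (show p - 1 + 1 < n r by omega)]
              exact star_mk_eq_iff.2 ⟨rfl, by omega⟩

end MainAux

/-- For an all-even subdivided star `T = S(n 0, …, n (ℓ-1))` with `ℓ ≥ 3`
branches and `n 0 ≥ n 1 ≥ ⋯ ≥ n (ℓ-1)` positive even integers,
`γ'_SMB(T) ≤ max({(i+1) + ⌈log₂ (n i)⌉ : 0 ≤ i ≤ ℓ-3} ∪
{ℓ-2 + ⌈log₂(n (ℓ-2) + n (ℓ-1) + 1)⌉})` (indices shifted to start from `0`). -/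
theorem stmt_19 (ℓ : ℕ) (hℓ : 3 ≤ ℓ) (n : ℕ → ℕ)
    (hpos : ∀ i < ℓ, 0 < n i) (heven : ∀ i < ℓ, Even (n i))
    (hmono : ∀ i j, i ≤ j → j < ℓ → n j ≤ n i) :
    gammaSMB' (subdividedStar ℓ n) ≤
      (((Finset.range (ℓ - 2)).sup (fun i => (i + 1) + Nat.clog 2 (n i)) ⊔
        ((ℓ - 2) + Nat.clog 2 (n (ℓ - 2) + n (ℓ - 1) + 1)) : ℕ) : ℕ∞) := by
  set bound := (Finset.range (ℓ - 2)).sup (fun i => (i + 1) + Nat.clog 2 (n i)) ⊔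
    ((ℓ - 2) + Nat.clog 2 (n (ℓ - 2) + n (ℓ - 1) + 1)) with hbdef
  have hb1 : ∀ i < ℓ - 2, i + 1 + Nat.clog 2 (n i) ≤ bound := fun i hi =>
    le_trans (Finset.le_sup (f := fun i => (i + 1) + Nat.clog 2 (n i))
      (Finset.mem_range.2 hi)) le_sup_left
  have hb2 : ℓ - 2 + Nat.clog 2 (n (ℓ - 2) + n (ℓ - 1) + 1) ≤ bound := le_sup_right
  have hwin := star_main ℓ n hℓ hpos heven bound hb1 hb2 (ℓ - 2) 0 (by omega) ∅
    (by simp) (fun i j _ => by simp)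
  have hM0 : Mset ℓ n 0 = ∅ := by
    ext v
    simp only [mem_Mset, Finset.notMem_empty, iff_false]
    rintro ⟨i, h, hi, -⟩
    omega
  rw [hM0, Nat.sub_zero] at hwin
  exact hwin.mbVal_le
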